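/- (Case 5a of the SP-WENO case analysis.) Assume Δz_{i+1/2} ≠ 0, θ_i^+ = 1, and θ_{i+1}^- > 1, and that the weights are consistent (-3/8 ≤ C_1, C_2 ≤ 1/8). Then the sign-property constraint w̃_0(1 - θ_{i+1}^-) + w_1(1 - θ_i^+) ≥ 0 holds if and only if C_2 = 1/8 (equivalently w̃_0 = 0); in particular C_1 is unconstrained beyond consistency. -/
import Mathlib


/-- Case 5a of the SP-WENO case analysis: if `Δz_{i+1/2} ≠ 0`,
`θ⁺_i = 1`, `θ⁻_{i+1} > 1` and the weights are consistent
(`-3/8 ≤ C₁, C₂ ≤ 1/8`), then the sign-property constraint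
`w̃₀(1 - θ⁻_{i+1}) + w₁(1 - θ⁺_i) ≥ 0` holds iff `C₂ = 1/8`
(equivalently `w̃₀ = 0`); `C₁` is unconstrained beyond consistency. -/
theorem sp_weno_case5a (zm z0 z1 z2 C1 C2 : ℝ) (hΔ : z1 - z0 ≠ 0)
    (hθp : (z0 - zm)/(z1 - z0) = 1) (hθm : (z2 - z1)/(z1 - z0) > 1)
    (hC1l : -(3/8) ≤ C1) (hC1u : C1 ≤ 1/8)
    (hC2l : -(3/8) ≤ C2) (hC2u : C2 ≤ 1/8) :
    (1/4 - 2*C2)*(1 - (z2 - z1)/(z1 - z0))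
        + (1/4 - 2*C1)*(1 - (z0 - zm)/(z1 - z0)) ≥ 0 ↔ C2 = 1/8 := by
  rw [hθp]
  set t := (z2 - z1)/(z1 - z0) with ht
  constructor
  · intro h
    nlinarith [h, hθm, hC2u]
  · intro h
    subst h
    nlinarith [hθm]
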